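/- Let Ω ⊆ ℝⁿ (n ≥ 2) be a nonempty, open, bounded set and let G ⊆ Ω be Lebesgue-measurable with P_Ω(G) < ∞. Let ξ_k ↘ 0 and let φ_k : Ω → ℝ (k = 1, 2, …) be continuously differentiable with x ↦ |∇φ_k(x)|² and x ↦ W(φ_k(x)) Lebesgue integrable on Ω. Assume φ_k → χ_G almost everywhere in Ω and sup_{k ≥ 1} ∫_Ω [(ξ_k/2)|∇φ_k|² + W(φ_k)/ξ_k] dx < ∞. Define η_k(x) := ∫₀^{φ_k(x)} √(2 W(t)) dt. Then for every continuously differentiable vector field g : Ω → ℝⁿ with compact support in Ω, lim_{k→∞} ∫_Ω ∇η_k · g dx = − ∫_G div g dx. -/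

import Mathlib

open MeasureTheory Filter Topology RealInnerProductSpace

/-- The quartic double-well potential `W(s) = 18 s² (1-s)²`. -/
noncomputable def W (s : ℝ) : ℝ := 18 * s ^ 2 * (1 - s) ^ 2

/-- Divergence of a vector field on `ℝⁿ`. -/
noncomputable def vdiv {n : ℕ} (g : EuclideanSpace ℝ (Fin n) → EuclideanSpace ℝ (Fin n))
    (x : EuclideanSpace ℝ (Fin n)) : ℝ :=
  ∑ i, fderiv ℝ g x (EuclideanSpace.single i 1) i

/-- The set of numbers `∫_G div g` over admissible test vector fields `g` (C¹, compactly
supported in `Ω`, with `|g| ≤ 1`), whose supremum is the perimeter of `G` in `Ω`. -/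
noncomputable def perimSet {n : ℕ} (Ω G : Set (EuclideanSpace ℝ (Fin n))) : Set ℝ :=
  { r | ∃ g : EuclideanSpace ℝ (Fin n) → EuclideanSpace ℝ (Fin n),
      ContDiff ℝ 1 g ∧ HasCompactSupport g ∧ tsupport g ⊆ Ω ∧
      (∀ x, ‖g x‖ ≤ 1) ∧ r = ∫ x in G, vdiv g x }

/-- The perimeter `P_Ω(G)` of `G` in `Ω`. -/
noncomputable def perim {n : ℕ} (Ω G : Set (EuclideanSpace ℝ (Fin n))) : ℝ :=
  sSup (perimSet Ω G)

/-- `η_k(x) = ∫₀^{φ_k(x)} √(2W(t)) dt`. -/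
noncomputable def etaFn {n : ℕ} (φ : ℕ → EuclideanSpace ℝ (Fin n) → ℝ) (k : ℕ)
    (x : EuclideanSpace ℝ (Fin n)) : ℝ :=
  ∫ t in (0 : ℝ)..(φ k x), Real.sqrt (2 * W t)


lemma W_nonneg (s : ℝ) : 0 ≤ W s := by unfold W; positivity

lemma sqrt2W_eq (t : ℝ) : Real.sqrt (2 * W t) = |6 * t * (1 - t)| := by
  rw [show 2 * W t = (6 * t * (1 - t)) ^ 2 by unfold W; ring, Real.sqrt_sq_eq_abs]

lemma sqrt2W_cont : Continuous (fun t => Real.sqrt (2 * W t)) := by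
  apply Real.continuous_sqrt.comp
  unfold W; continuity

noncomputable def Ffun (s : ℝ) : ℝ := ∫ t in (0:ℝ)..s, Real.sqrt (2 * W t)

lemma Ffun_hasDerivAt (s : ℝ) : HasDerivAt Ffun (Real.sqrt (2 * W s)) s :=
  (sqrt2W_cont.integral_hasStrictDerivAt 0 s).hasDerivAt

lemma Ffun_cont : Continuous Ffun :=
  continuous_iff_continuousAt.2 fun s => (Ffun_hasDerivAt s).continuousAt

lemma Ffun_zero : Ffun 0 = 0 := by simp [Ffun]

lemma Ffun_one : Ffun 1 = 1 := by
  unfold Ffun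
  rw [intervalIntegral.integral_congr (g := fun t => 6 * t - 6 * t ^ 2) ?_]
  · rw [intervalIntegral.integral_sub (by apply IntervalIntegrable.const_mul; exact intervalIntegral.intervalIntegrable_id) (by apply IntervalIntegrable.const_mul; exact (continuous_pow 2).intervalIntegrable _ _)]
    rw [intervalIntegral.integral_const_mul, intervalIntegral.integral_const_mul]
    simp [integral_id, integral_pow]
    norm_num
  · intro t ht
    simp only [Set.uIcc_of_le (by norm_num : (0:ℝ) ≤ 1), Set.mem_Icc] at ht
    show Real.sqrt (2 * W t) = 6 * t - 6 * t ^ 2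
    rw [sqrt2W_eq, abs_of_nonneg (by nlinarith [ht.1, ht.2])]
    ring

lemma Ffun_bound (s : ℝ) : |Ffun s| ≤ 30 + W s := by
  have h1 : |Ffun s| ≤ (6 * |s| * (1 + |s|)) * |s - 0| := by
    unfold Ffun
    rw [← Real.norm_eq_abs]
    apply intervalIntegral.norm_integral_le_of_norm_le_const
    intro t ht
    have ht' : |t| ≤ |s| := by
      rcases Set.mem_uIoc.1 ht with h | h
      · rw [abs_of_pos h.1, abs_of_nonneg (le_trans h.1.le h.2)]; exact h.2
      · rw [abs_of_nonpos h.2, abs_of_neg (lt_of_lt_of_le h.1 h.2)]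
        linarith [le_of_lt h.1]
    rw [Real.norm_eq_abs, abs_of_nonneg (Real.sqrt_nonneg _), sqrt2W_eq]
    have habs : |6 * t * (1 - t)| = 6 * |t| * |1 - t| := by
      rw [abs_mul, abs_mul]; norm_num
    rw [habs]
    have h2 : |1 - t| ≤ 1 + |s| := by
      calc |1 - t| ≤ |(1:ℝ)| + |t| := abs_sub _ _
      _ ≤ 1 + |s| := by rw [abs_one]; linarith
    nlinarith [abs_nonneg t, abs_nonneg s]
  rw [sub_zero] at h1
  have ha : 0 ≤ |s| := abs_nonneg s
  have hW : 18 * |s| ^ 2 * (1 - |s|) ^ 2 ≤ W s := by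
    unfold W
    rcases abs_cases s with ⟨h, _⟩ | ⟨h, hneg⟩
    · rw [h]
    · rw [h]; nlinarith
  have key : 6 * |s| * (1 + |s|) * |s| ≤ 30 + 18 * |s| ^ 2 * (1 - |s|) ^ 2 := by
    nlinarith [sq_nonneg (|s| - 2), sq_nonneg (|s| * (|s| - 2)), sq_nonneg (|s| ^ 2 - 2 * |s|), sq_nonneg (|s| - 1)]
  linarith

set_option maxHeartbeats 1000000 in

lemma pi_integral_div_eq_zero {m : ℕ} (f : (Fin (m + 1) → ℝ) → (Fin (m + 1) → ℝ))
    (hd : Differentiable ℝ f) (hs : HasCompactSupport f)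
    (hc : Continuous (fun x => ∑ i, fderiv ℝ f x (Pi.single i 1) i)) :
    ∫ x, ∑ i, fderiv ℝ f x (Pi.single i 1) i = 0 := by
  obtain ⟨R, hR⟩ := hs.isBounded.subset_closedBall 0
  set R' : ℝ := max R 0 with hR'def
  have hR'nn : 0 ≤ R' := le_max_right _ _
  have hsupp : tsupport f ⊆ Metric.closedBall 0 R' :=
    hR.trans (Metric.closedBall_subset_closedBall (le_max_left _ _))
  set a : Fin (m + 1) → ℝ := fun _ => -(R' + 1) with ha
  set b : Fin (m + 1) → ℝ := fun _ => R' + 1 with hb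
  have hle : a ≤ b := fun i => by simp [ha, hb]; linarith
  have hball_sub : Metric.closedBall (0 : Fin (m+1) → ℝ) R' ⊆ Set.Icc a b := by
    intro x hx
    rw [Metric.mem_closedBall, dist_zero_right] at hx
    constructor <;> intro i <;>
    · have := (norm_le_pi_norm x i).trans hx
      rw [Real.norm_eq_abs, abs_le] at this
      simp only [ha, hb]
      linarith [this.1, this.2]
  have hzero_out : ∀ x ∉ Set.Icc a b, (∑ i, fderiv ℝ f x (Pi.single i 1) i) = 0 := by
    intro x hx
    have hxt : x ∉ tsupport f := fun h => hx (hball_sub (hsupp h))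
    have : fderiv ℝ f x = 0 := by
      by_contra h
      exact hxt (support_fderiv_subset ℝ (Function.mem_support.2 h))
    simp [this]
  rw [← setIntegral_eq_integral_of_forall_compl_eq_zero hzero_out]
  rw [MeasureTheory.integral_divergence_of_hasFDerivAt_off_countable a b hle f
    (fun x => fderiv ℝ f x) ∅ Set.countable_empty hd.continuous.continuousOn
    (fun x _ => (hd x).hasFDerivAt)
    ((hc.continuousOn).integrableOn_compact isCompact_Icc)]
  apply Finset.sum_eq_zero
  intro i _
  have hface : ∀ (c : ℝ), |c| = R' + 1 → ∀ (y : Fin m → ℝ), f (i.insertNth c y) = 0 := by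
    intro c hcabs y
    apply image_eq_zero_of_notMem_tsupport
    intro hmem
    have := hsupp hmem
    rw [Metric.mem_closedBall, dist_zero_right] at this
    have h2 : ‖(i.insertNth c y : Fin (m+1) → ℝ) i‖ ≤ R' :=
      le_trans (norm_le_pi_norm (i.insertNth c y : Fin (m+1) → ℝ) i) this
    rw [Fin.insertNth_apply_same, Real.norm_eq_abs, hcabs] at h2
    linarith
  have h1 : ∀ y, f (i.insertNth (b i) y) i = 0 := fun y => by
    rw [hface (b i) (by simp [hb]; linarith) y]; rfl
  have h2 : ∀ y, f (i.insertNth (a i) y) i = 0 := fun y => by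
    rw [hface (a i) (by simp [ha]; rw [abs_of_nonpos] <;> linarith) y]; rfl
  simp only [h1, h2]
  simp

lemma euclid_integral_div_eq_zero {n : ℕ} (hn : n ≠ 0)
    (u : EuclideanSpace ℝ (Fin n) → EuclideanSpace ℝ (Fin n))
    (hd : Differentiable ℝ u) (hs : HasCompactSupport u)
    (hc : Continuous (vdiv u)) :
    ∫ x, vdiv u x = 0 := by
  obtain ⟨m, rfl⟩ := Nat.exists_eq_succ_of_ne_zero hn
  set eqv := EuclideanSpace.equiv (Fin (m + 1)) ℝ with heqv
  set f : (Fin (m + 1) → ℝ) → (Fin (m + 1) → ℝ) := fun y => eqv (u (eqv.symm y)) with hf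
  have hfd : Differentiable ℝ f :=
    eqv.differentiable.comp (hd.comp eqv.symm.differentiable)
  have hfs : HasCompactSupport f := by
    have h1 : HasCompactSupport (⇑eqv ∘ u) := hs.comp_left (map_zero _)
    exact h1.comp_homeomorph eqv.symm.toHomeomorph
  have hfderiv : ∀ y, fderiv ℝ f y =
      (eqv : EuclideanSpace ℝ (Fin (m+1)) →L[ℝ] (Fin (m+1) → ℝ)).comp
        ((fderiv ℝ u (eqv.symm y)).comp
          (eqv.symm : (Fin (m+1) → ℝ) →L[ℝ] EuclideanSpace ℝ (Fin (m+1)))) := by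
    intro y
    have h1 : f = ⇑eqv ∘ (u ∘ ⇑eqv.symm) := rfl
    rw [h1, ContinuousLinearEquiv.comp_fderiv]
    congr 1
    rw [fderiv_comp y (hd _) eqv.symm.differentiableAt, eqv.symm.fderiv]
  have hdivf : ∀ y, (∑ i, fderiv ℝ f y (Pi.single i 1) i) = vdiv u (eqv.symm y) := by
    intro y
    rw [hfderiv y]
    unfold vdiv
    rfl
  have key := pi_integral_div_eq_zero f hfd hfs (by
    simpa only [hdivf, Function.comp_def] using hc.comp eqv.symm.continuous)
  simp only [hdivf] at key
  have hmp : MeasurePreserving (⇑(MeasurableEquiv.toLp 2 (Fin (m+1) → ℝ)))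
      (volume : Measure (Fin (m+1) → ℝ)) volume :=
    (EuclideanSpace.volume_preserving_symm_measurableEquiv_toLp (Fin (m+1))).symm _
  have hcomp := hmp.integral_comp
    (MeasurableEquiv.toLp 2 (Fin (m+1) → ℝ)).measurableEmbedding (vdiv u)
  rw [← hcomp] at *
  convert key using 2
  rfl

lemma inner_gradient {n : ℕ} (f : EuclideanSpace ℝ (Fin n) → ℝ) (x v : EuclideanSpace ℝ (Fin n)) :
    ⟪gradient f x, v⟫ = fderiv ℝ f x v :=
  InnerProductSpace.toDual_symm_apply

lemma real_inner_euclid {n : ℕ} (a b : EuclideanSpace ℝ (Fin n)) :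
    ⟪a, b⟫ = ∑ i, a i * b i := by
  simp [PiLp.inner_apply, RCLike.inner_apply, mul_comm]

lemma parts_identity {n : ℕ} (hn : n ≠ 0) {Ω : Set (EuclideanSpace ℝ (Fin n))}
    (hΩopen : IsOpen Ω)
    (φk : EuclideanSpace ℝ (Fin n) → ℝ) (hφk : ContDiffOn ℝ 1 φk Ω)
    (g : EuclideanSpace ℝ (Fin n) → EuclideanSpace ℝ (Fin n))
    (hg : ContDiff ℝ 1 g) (hgcs : HasCompactSupport g) (hgsupp : tsupport g ⊆ Ω)
    (hA : IntegrableOn (fun x => Real.sqrt (2 * W (φk x)) * ⟪gradient φk x, g x⟫) Ω)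
    (hB : IntegrableOn (fun x => Ffun (φk x) * vdiv g x) Ω) :
    ∫ x in Ω, Real.sqrt (2 * W (φk x)) * ⟪gradient φk x, g x⟫
      = - ∫ x in Ω, Ffun (φk x) * vdiv g x := by
  set u : EuclideanSpace ℝ (Fin n) → EuclideanSpace ℝ (Fin n) :=
    fun x => Ffun (φk x) • g x with hu_def
  -- derivative of u on Ω
  have hu : ∀ x ∈ Ω, HasFDerivAt u
      (Ffun (φk x) • fderiv ℝ g x
        + (Real.sqrt (2 * W (φk x)) • fderiv ℝ φk x).smulRight (g x)) x := by
    intro x hx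
    have hφd : DifferentiableAt ℝ φk x :=
      (hφk.differentiableOn one_ne_zero).differentiableAt (hΩopen.mem_nhds hx)
    have hη : HasFDerivAt (fun y => Ffun (φk y))
        (Real.sqrt (2 * W (φk x)) • fderiv ℝ φk x) x :=
      (Ffun_hasDerivAt (φk x)).comp_hasFDerivAt x hφd.hasFDerivAt
    exact hη.smul (hg.differentiable one_ne_zero x).hasFDerivAt
  -- u vanishes near points outside the support of g
  have hu0 : ∀ x ∉ tsupport g, u =ᶠ[𝓝 x] 0 := by
    intro x hx
    have : (tsupport g)ᶜ ∈ 𝓝 x := (isClosed_tsupport g).isOpen_compl.mem_nhds hx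
    filter_upwards [this] with y hy
    simp [hu_def, image_eq_zero_of_notMem_tsupport hy]
  have hu0' : ∀ x ∉ tsupport g, HasFDerivAt u
      (0 : EuclideanSpace ℝ (Fin n) →L[ℝ] EuclideanSpace ℝ (Fin n)) x := fun x hx =>
    (hasFDerivAt_const (0 : EuclideanSpace ℝ (Fin n)) x).congr_of_eventuallyEq (hu0 x hx)
  have hudiff : Differentiable ℝ u := by
    intro x
    by_cases hx : x ∈ Ω
    · exact (hu x hx).differentiableAt
    · exact (hu0' x (fun h => hx (hgsupp h))).differentiableAt
  have husupp : HasCompactSupport u := by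
    apply hgcs.mono
    intro x hx
    simp only [Function.mem_support, hu_def] at hx ⊢
    intro h
    exact hx (by rw [h, smul_zero])
  -- the divergence of u on Ω
  have hfze : ∀ x ∉ tsupport g, fderiv ℝ u x = 0 := fun x hx => (hu0' x hx).fderiv
  have hdivout : ∀ x ∉ tsupport g, vdiv u x = 0 := by
    intro x hx
    unfold vdiv
    rw [hfze x hx]
    simp
  have hdivΩ : ∀ x ∈ Ω, vdiv u x =
      Real.sqrt (2 * W (φk x)) * ⟪gradient φk x, g x⟫ + Ffun (φk x) * vdiv g x := by
    intro x hx
    have hfd := (hu x hx).fderiv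
    unfold vdiv
    rw [hfd]
    have hcoord : ∀ i : Fin n,
        ((Ffun (φk x) • fderiv ℝ g x
          + (Real.sqrt (2 * W (φk x)) • fderiv ℝ φk x).smulRight (g x))
            (EuclideanSpace.single i 1)) i
        = Ffun (φk x) * (fderiv ℝ g x (EuclideanSpace.single i 1) i)
          + Real.sqrt (2 * W (φk x)) * (gradient φk x i * g x i) := by
      intro i
      have hgrad : fderiv ℝ φk x (EuclideanSpace.single i 1) = gradient φk x i := by
        rw [← inner_gradient, EuclideanSpace.inner_single_right]
        simp
      simp only [ContinuousLinearMap.add_apply, ContinuousLinearMap.smul_apply,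
        ContinuousLinearMap.smulRight_apply, ContinuousLinearMap.coe_smul',
        Pi.smul_apply, PiLp.add_apply, PiLp.smul_apply, smul_eq_mul, hgrad]
      ring
    rw [Finset.sum_congr rfl (fun i _ => hcoord i), Finset.sum_add_distrib,
      ← Finset.mul_sum, ← Finset.mul_sum]
    rw [real_inner_euclid]
    ring_nf
  -- continuity of vdiv u
  have hψcont : ContinuousOn (fun x =>
      Real.sqrt (2 * W (φk x)) * ⟪gradient φk x, g x⟫ + Ffun (φk x) * vdiv g x) Ω := by
    have h1 : ContinuousOn (fun x => Real.sqrt (2 * W (φk x))) Ω :=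
      sqrt2W_cont.comp_continuousOn (hφk.continuousOn)
    have hgradcont : ContinuousOn (fun x => gradient φk x) Ω := by
      have := hφk.continuousOn_fderiv_of_isOpen hΩopen le_rfl
      exact ((InnerProductSpace.toDual ℝ (EuclideanSpace ℝ (Fin n))).symm.continuous.comp_continuousOn this)
    have h2 : ContinuousOn (fun x => ⟪gradient φk x, g x⟫) Ω :=
      hgradcont.inner (hg.continuous.continuousOn)
    have h3 : ContinuousOn (fun x => Ffun (φk x)) Ω :=
      Ffun_cont.comp_continuousOn hφk.continuousOn
    have h4 : Continuous (vdiv g) := by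
      unfold vdiv
      apply continuous_finset_sum
      intro i _
      exact (EuclideanSpace.proj i).continuous.comp
        ((ContinuousLinearMap.apply ℝ (EuclideanSpace ℝ (Fin n))
          (EuclideanSpace.single i 1)).continuous.comp (hg.continuous_fderiv one_ne_zero))
    exact (h1.mul h2).add (h3.mul h4.continuousOn)
  have hdivcont : Continuous (vdiv u) := by
    rw [continuous_iff_continuousAt]
    intro x
    by_cases hx : x ∈ Ω
    · refine ContinuousAt.congr ((hψcont.continuousAt (hΩopen.mem_nhds hx))) ?_
      filter_upwards [hΩopen.mem_nhds hx] with y hy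
      exact (hdivΩ y hy).symm
    · have hx' : x ∉ tsupport g := fun h => hx (hgsupp h)
      have : (tsupport g)ᶜ ∈ 𝓝 x := (isClosed_tsupport g).isOpen_compl.mem_nhds hx'
      refine ContinuousAt.congr (continuousAt_const (y := (0:ℝ))) ?_
      filter_upwards [this] with y hy
      exact (hdivout y hy).symm
  -- divergence theorem
  have hkey : ∫ x, vdiv u x = 0 := euclid_integral_div_eq_zero hn u hudiff husupp hdivcont
  have hset : ∫ x in Ω, vdiv u x = 0 := by
    rw [setIntegral_eq_integral_of_forall_compl_eq_zero
      (fun x hx => hdivout x (fun h => hx (hgsupp h)))]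
    exact hkey
  have hcongr : ∫ x in Ω, vdiv u x
      = ∫ x in Ω, (Real.sqrt (2 * W (φk x)) * ⟪gradient φk x, g x⟫
          + Ffun (φk x) * vdiv g x) :=
    setIntegral_congr_fun hΩopen.measurableSet (fun x hx => hdivΩ x hx)
  rw [hcongr, integral_add hA hB] at hset
  linarith

lemma vdiv_continuous {n : ℕ} {g : EuclideanSpace ℝ (Fin n) → EuclideanSpace ℝ (Fin n)}
    (hg : ContDiff ℝ 1 g) : Continuous (vdiv g) := by
  unfold vdiv
  apply continuous_finset_sum
  intro i _
  exact (EuclideanSpace.proj i).continuous.comp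
    ((ContinuousLinearMap.apply ℝ (EuclideanSpace ℝ (Fin n))
      (EuclideanSpace.single i 1)).continuous.comp (hg.continuous_fderiv one_ne_zero))


theorem grad_etaFn_weak_convergence {n : ℕ} (hn : 2 ≤ n)
    (Ω : Set (EuclideanSpace ℝ (Fin n))) (hΩne : Ω.Nonempty) (hΩopen : IsOpen Ω)
    (hΩbdd : Bornology.IsBounded Ω)
    (G : Set (EuclideanSpace ℝ (Fin n))) (hGmeas : MeasurableSet G) (hGΩ : G ⊆ Ω)
    (hPfin : BddAbove (perimSet Ω G))
    (ξ : ℕ → ℝ) (hξpos : ∀ k, 0 < ξ k) (hξanti : StrictAnti ξ)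
    (hξ0 : Tendsto ξ atTop (𝓝 0))
    (φ : ℕ → EuclideanSpace ℝ (Fin n) → ℝ)
    (hφ : ∀ k, ContDiffOn ℝ 1 (φ k) Ω)
    (hgradInt : ∀ k, IntegrableOn (fun x => ‖gradient (φ k) x‖ ^ 2) Ω)
    (hWInt : ∀ k, IntegrableOn (fun x => W (φ k x)) Ω)
    (hae : ∀ᵐ x ∂(volume.restrict Ω),
      Tendsto (fun k => φ k x) atTop (𝓝 (G.indicator (fun _ => (1 : ℝ)) x)))
    (hsup : ∃ C : ℝ, ∀ k,
      (∫ x in Ω, (ξ k / 2 * ‖gradient (φ k) x‖ ^ 2 + W (φ k x) / ξ k)) ≤ C) :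
    ∀ g : EuclideanSpace ℝ (Fin n) → EuclideanSpace ℝ (Fin n),
      ContDiff ℝ 1 g → HasCompactSupport g → tsupport g ⊆ Ω →
      Tendsto
        (fun k => ∫ x in Ω, Real.sqrt (2 * W (φ k x)) * ⟪gradient (φ k) x, g x⟫)
        atTop (𝓝 (-∫ x in G, vdiv g x)) := by
  intro g hg hgcs hgsupp
  obtain ⟨C, hC⟩ := hsup
  have hΩmeas : MeasurableSet Ω := hΩopen.measurableSet
  have hμΩ : volume Ω < ⊤ := hΩbdd.measure_lt_top
  have hμΩ' : volume.restrict Ω Set.univ < ⊤ := by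
    rw [Measure.restrict_apply_univ]; exact hμΩ
  -- bounds on g and vdiv g
  have hdcont : Continuous (vdiv g) := vdiv_continuous hg
  have hd_cs : HasCompactSupport (vdiv g) := by
    apply (hgcs.fderiv ℝ).mono
    intro x hx
    simp only [Function.mem_support] at hx ⊢
    intro h
    apply hx
    unfold vdiv
    rw [h]
    simp
  obtain ⟨Md, hMd⟩ := hdcont.bounded_above_of_compact_support hd_cs
  obtain ⟨Mg, hMg⟩ := hg.continuous.bounded_above_of_compact_support hgcs
  have hMd0 : 0 ≤ Md := le_trans (norm_nonneg _) (hMd 0)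
  have hMg0 : 0 ≤ Mg := le_trans (norm_nonneg _) (hMg 0)
  -- energy bound on the potential term
  have hWle : ∀ k, (∫ x in Ω, W (φ k x)) ≤ C * ξ k := by
    intro k
    have h1 : (∫ x in Ω, W (φ k x) / ξ k)
        ≤ ∫ x in Ω, (ξ k / 2 * ‖gradient (φ k) x‖ ^ 2 + W (φ k x) / ξ k) := by
      apply integral_mono ((hWInt k).div_const _)
        (((hgradInt k).const_mul _).add ((hWInt k).div_const _))
      intro x
      have h0 := sq_nonneg ‖gradient (φ k) x‖
      have h1 := (hξpos k).le
      simp only [Pi.add_apply]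
      nlinarith
    rw [integral_div] at h1
    have h2 := h1.trans (hC k)
    exact (div_le_iff₀ (hξpos k)).1 h2
  have hWnn : ∀ k, 0 ≤ ∫ x in Ω, W (φ k x) :=
    fun k => integral_nonneg fun x => W_nonneg _
  -- continuity pieces
  have hφcont : ∀ k, ContinuousOn (φ k) Ω := fun k => (hφ k).continuousOn
  have hAcont : ∀ k, ContinuousOn
      (fun x => Real.sqrt (2 * W (φ k x)) * ⟪gradient (φ k) x, g x⟫) Ω := by
    intro k
    have h1 : ContinuousOn (fun x => Real.sqrt (2 * W (φ k x))) Ω :=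
      sqrt2W_cont.comp_continuousOn (hφcont k)
    have hgradcont : ContinuousOn (fun x => gradient (φ k) x) Ω :=
      (InnerProductSpace.toDual ℝ (EuclideanSpace ℝ (Fin n))).symm.continuous.comp_continuousOn
        ((hφ k).continuousOn_fderiv_of_isOpen hΩopen le_rfl)
    exact h1.mul (hgradcont.inner hg.continuous.continuousOn)
  have hBcont : ∀ k, ContinuousOn (fun x => Ffun (φ k x) * vdiv g x) Ω := fun k =>
    (Ffun_cont.comp_continuousOn (hφcont k)).mul hdcont.continuousOn
  -- integrability of A and B
  have hAint : ∀ k, IntegrableOn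
      (fun x => Real.sqrt (2 * W (φ k x)) * ⟪gradient (φ k) x, g x⟫) Ω := by
    intro k
    apply Integrable.mono'
      ((((hgradInt k).const_mul (ξ k / 2)).add ((hWInt k).div_const (ξ k))).const_mul Mg)
      ((hAcont k).aestronglyMeasurable hΩmeas)
    filter_upwards with x
    have hb : Real.sqrt (2 * W (φ k x)) ^ 2 = 2 * W (φ k x) :=
      Real.sq_sqrt (by linarith [W_nonneg (φ k x)])
    have hb0 : 0 ≤ Real.sqrt (2 * W (φ k x)) := Real.sqrt_nonneg _
    have hinner : |⟪gradient (φ k) x, g x⟫| ≤ ‖gradient (φ k) x‖ * Mg := by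
      refine (abs_real_inner_le_norm _ _).trans ?_
      exact mul_le_mul_of_nonneg_left (hMg x) (norm_nonneg _)
    rw [Real.norm_eq_abs, abs_mul, abs_of_nonneg hb0]
    have hyoung : Real.sqrt (2 * W (φ k x)) * ‖gradient (φ k) x‖
        ≤ ξ k / 2 * ‖gradient (φ k) x‖ ^ 2 + W (φ k x) / ξ k := by
      have hξ := hξpos k
      have h1 : W (φ k x) / ξ k * ξ k = W (φ k x) := div_mul_cancel₀ _ (ne_of_gt hξ)
      nlinarith [sq_nonneg (ξ k * ‖gradient (φ k) x‖ - Real.sqrt (2 * W (φ k x))),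
        hξ, mul_pos hξ hξ]
    calc Real.sqrt (2 * W (φ k x)) * |⟪gradient (φ k) x, g x⟫|
        ≤ Real.sqrt (2 * W (φ k x)) * (‖gradient (φ k) x‖ * Mg) :=
          mul_le_mul_of_nonneg_left hinner hb0
      _ ≤ Mg * (ξ k / 2 * ‖gradient (φ k) x‖ ^ 2 + W (φ k x) / ξ k) := by nlinarith
  have hBint : ∀ k, IntegrableOn (fun x => Ffun (φ k x) * vdiv g x) Ω := by
    intro k
    apply Integrable.mono'
      (((integrableOn_const (C := (30:ℝ)) hμΩ.ne).add (hWInt k)).mul_const Md)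
      ((hBcont k).aestronglyMeasurable hΩmeas)
    filter_upwards with x
    rw [Real.norm_eq_abs, abs_mul]
    have h1 := Ffun_bound (φ k x)
    have h2 := hMd x
    have h3 := W_nonneg (φ k x)
    have h4 : (0:ℝ) ≤ |Ffun (φ k x)| := abs_nonneg _
    rw [Real.norm_eq_abs] at h2
    calc |Ffun (φ k x)| * |vdiv g x| ≤ (30 + W (φ k x)) * Md := by nlinarith [abs_nonneg (vdiv g x)]
      _ = ((fun _ => (30:ℝ)) x + W (φ k x)) * Md := by norm_num
  -- the integration by parts identity
  have hident : ∀ k,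
      (∫ x in Ω, Real.sqrt (2 * W (φ k x)) * ⟪gradient (φ k) x, g x⟫)
        = - ∫ x in Ω, Ffun (φ k x) * vdiv g x := fun k =>
    parts_identity (by omega) hΩopen (φ k) (hφ k) g hg hgcs hgsupp (hAint k) (hBint k)
  -- the limit function
  set ind : EuclideanSpace ℝ (Fin n) → ℝ := G.indicator (fun _ => (1:ℝ)) with hind_def
  have hind_le : ∀ x, |ind x| ≤ 1 := by
    intro x
    by_cases hx : x ∈ G <;> simp [hind_def, hx]
  have hflim_eq : (∫ x in Ω, ind x * vdiv g x) = ∫ x in G, vdiv g x := by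
    have h1 : ∀ x, ind x * vdiv g x = G.indicator (vdiv g) x := by
      intro x
      by_cases hx : x ∈ G <;> simp [hind_def, Set.indicator_of_mem, Set.indicator_of_notMem, hx]
    simp_rw [h1]
    rw [setIntegral_indicator hGmeas, Set.inter_eq_self_of_subset_right hGΩ]
  have hindAESM : AEStronglyMeasurable ind (volume.restrict Ω) :=
    (measurable_const.indicator hGmeas).aestronglyMeasurable
  have : IsFiniteMeasure (volume.restrict Ω) := ⟨hμΩ'⟩
  have hflim_int : Integrable (fun x => ind x * vdiv g x) (volume.restrict Ω) := by
    apply Integrable.mono' (integrable_const (1 * Md))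
      (hindAESM.mul hdcont.aestronglyMeasurable)
    filter_upwards with x
    rw [Pi.mul_apply, Real.norm_eq_abs, abs_mul]
    have := hind_le x
    have := hMd x
    rw [Real.norm_eq_abs] at this
    nlinarith [abs_nonneg (ind x), abs_nonneg (vdiv g x)]
  -- a.e. convergence of Ffun ∘ φ k to ind
  have haeF : ∀ᵐ x ∂(volume.restrict Ω),
      Tendsto (fun k => Ffun (φ k x) - ind x) atTop (𝓝 0) := by
    filter_upwards [hae] with x hx
    have h1 : Tendsto (fun k => Ffun (φ k x)) atTop (𝓝 (Ffun (ind x))) :=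
      (Ffun_cont.tendsto _).comp hx
    have h2 : Ffun (ind x) = ind x := by
      by_cases hxG : x ∈ G <;> simp [hind_def, hxG, Ffun_one, Ffun_zero]
    rw [h2] at h1
    simpa using h1.sub (tendsto_const_nhds (x := ind x))
  -- AE measurability of the ENNReal-valued differences
  have hηAESM : ∀ k, AEStronglyMeasurable (fun x => Ffun (φ k x)) (volume.restrict Ω) :=
    fun k => (Ffun_cont.comp_continuousOn (hφcont k)).aestronglyMeasurable hΩmeas
  set H : ℕ → EuclideanSpace ℝ (Fin n) → ENNReal :=
    fun k x => (‖Ffun (φ k x) - ind x‖₊ : ENNReal) with hH_def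
  have hHmeas : ∀ k, AEMeasurable (H k) (volume.restrict Ω) :=
    fun k => ((hηAESM k).sub hindAESM).enorm
  -- main lintegral convergence
  have main0 : Tendsto (fun k => ∫⁻ x, H k x ∂(volume.restrict Ω)) atTop (𝓝 0) := by
    have hbound : ∀ k, ∀ x, H k x ≤ min (H k x) 31 + ENNReal.ofReal (W (φ k x)) := by
      intro k x
      rcases le_total (H k x) 31 with h | h
      · rw [min_eq_left h]; exact le_add_of_nonneg_right (zero_le)
      · rw [min_eq_right h]
        have hreal : |Ffun (φ k x) - ind x| ≤ 31 + W (φ k x) := by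
          have := Ffun_bound (φ k x)
          have := hind_le x
          have := abs_sub (Ffun (φ k x)) (ind x)
          linarith
        calc H k x = ENNReal.ofReal |Ffun (φ k x) - ind x| := by
              rw [hH_def]; exact Real.enorm_eq_ofReal_abs _
          _ ≤ ENNReal.ofReal (31 + W (φ k x)) := ENNReal.ofReal_le_ofReal hreal
          _ = ENNReal.ofReal 31 + ENNReal.ofReal (W (φ k x)) :=
              ENNReal.ofReal_add (by norm_num) (W_nonneg _)
          _ = 31 + ENNReal.ofReal (W (φ k x)) := by norm_num
    have hsum_le : ∀ k, (∫⁻ x, H k x ∂(volume.restrict Ω))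
        ≤ (∫⁻ x, min (H k x) 31 ∂(volume.restrict Ω))
          + ∫⁻ x, ENNReal.ofReal (W (φ k x)) ∂(volume.restrict Ω) := by
      intro k
      calc (∫⁻ x, H k x ∂(volume.restrict Ω))
          ≤ ∫⁻ x, (min (H k x) 31 + ENNReal.ofReal (W (φ k x))) ∂(volume.restrict Ω) :=
            lintegral_mono (fun x => hbound k x)
        _ = _ := lintegral_add_left' ((hHmeas k).min aemeasurable_const) _
    have T1 : Tendsto (fun k => ∫⁻ x, min (H k x) 31 ∂(volume.restrict Ω)) atTop (𝓝 0) := by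
      have := tendsto_lintegral_of_dominated_convergence' (μ := volume.restrict Ω)
        (F := fun k x => min (H k x) 31) (f := fun _ => 0) (bound := fun _ => 31)
        (fun k => (hHmeas k).min aemeasurable_const)
        (fun k => Filter.Eventually.of_forall (fun x => min_le_right _ _))
        (by rw [lintegral_const]; exact ENNReal.mul_ne_top (by norm_num) hμΩ'.ne)
        ?_
      · simpa using this
      · filter_upwards [haeF] with x hx
        have hH0 : Tendsto (fun k => H k x) atTop (𝓝 0) := by
          rw [hH_def]
          have h1 : Tendsto (fun k => (‖Ffun (φ k x) - ind x‖₊ : NNReal)) atTop (𝓝 0) := by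
            simpa using hx.nnnorm
          simpa using (ENNReal.tendsto_coe.2 h1)
        exact tendsto_of_tendsto_of_tendsto_of_le_of_le tendsto_const_nhds hH0
          (fun k => zero_le) (fun k => min_le_left _ _)
    have T2 : Tendsto (fun k => ∫⁻ x, ENNReal.ofReal (W (φ k x)) ∂(volume.restrict Ω))
        atTop (𝓝 0) := by
      have heq : ∀ k, (∫⁻ x, ENNReal.ofReal (W (φ k x)) ∂(volume.restrict Ω))
          = ENNReal.ofReal (∫ x in Ω, W (φ k x)) := fun k =>
        (ofReal_integral_eq_lintegral_ofReal (hWInt k)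
          (Filter.Eventually.of_forall (fun x => W_nonneg _))).symm
      simp_rw [heq]
      have hCξ : Tendsto (fun k => ENNReal.ofReal (C * ξ k)) atTop (𝓝 0) := by
        have : Tendsto (fun k => C * ξ k) atTop (𝓝 (C * 0)) := hξ0.const_mul C
        rw [mul_zero] at this
        simpa using ENNReal.tendsto_ofReal this
      refine tendsto_of_tendsto_of_tendsto_of_le_of_le tendsto_const_nhds hCξ
        (fun k => zero_le) (fun k => ENNReal.ofReal_le_ofReal (hWle k))
    refine tendsto_of_tendsto_of_tendsto_of_le_of_le tendsto_const_nhds ?_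
      (fun k => zero_le) hsum_le
    simpa using T1.add T2
  -- L¹ convergence of B k to the limit function
  have hL1 : Tendsto (fun k => ∫⁻ x, ‖Ffun (φ k x) * vdiv g x - ind x * vdiv g x‖₊
      ∂(volume.restrict Ω)) atTop (𝓝 0) := by
    have hptle : ∀ k x, (‖Ffun (φ k x) * vdiv g x - ind x * vdiv g x‖₊ : ENNReal)
        ≤ ENNReal.ofReal Md * H k x := by
      intro k x
      have heq : Ffun (φ k x) * vdiv g x - ind x * vdiv g x
          = (Ffun (φ k x) - ind x) * vdiv g x := by ring
      have hHx : H k x = ENNReal.ofReal |Ffun (φ k x) - ind x| := Real.enorm_eq_ofReal_abs _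
      rw [heq, ← enorm_eq_nnnorm, Real.enorm_eq_ofReal_abs, abs_mul,
        ENNReal.ofReal_mul (abs_nonneg _), mul_comm, hHx]
      apply mul_le_mul_left
      apply ENNReal.ofReal_le_ofReal
      rw [← Real.norm_eq_abs]
      exact hMd x
    have hle : ∀ k, (∫⁻ x, ‖Ffun (φ k x) * vdiv g x - ind x * vdiv g x‖₊
        ∂(volume.restrict Ω)) ≤ ENNReal.ofReal Md * ∫⁻ x, H k x ∂(volume.restrict Ω) := by
      intro k
      calc _ ≤ ∫⁻ x, ENNReal.ofReal Md * H k x ∂(volume.restrict Ω) :=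
            lintegral_mono (hptle k)
        _ = _ := lintegral_const_mul' _ _ ENNReal.ofReal_ne_top
    have hMd_tendsto : Tendsto (fun k => ENNReal.ofReal Md * ∫⁻ x, H k x ∂(volume.restrict Ω))
        atTop (𝓝 0) := by
      have := ENNReal.Tendsto.const_mul (a := ENNReal.ofReal Md) main0
        (Or.inr ENNReal.ofReal_ne_top)
      simpa using this
    exact tendsto_of_tendsto_of_tendsto_of_le_of_le tendsto_const_nhds hMd_tendsto
      (fun k => zero_le) hle
  have hBtendsto : Tendsto (fun k => ∫ x in Ω, Ffun (φ k x) * vdiv g x) atTop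
      (𝓝 (∫ x in G, vdiv g x)) := by
    rw [← hflim_eq]
    exact tendsto_integral_of_L1 _ hflim_int.aestronglyMeasurable (Filter.Eventually.of_forall hBint) hL1
  -- conclusion
  have : (fun k => ∫ x in Ω, Real.sqrt (2 * W (φ k x)) * ⟪gradient (φ k) x, g x⟫)
      = fun k => - ∫ x in Ω, Ffun (φ k x) * vdiv g x := funext hident
  rw [this]
  exact hBtendsto.neg
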